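/- Let X be a mean-zero σ-subgaussian random variable with variance σ_X². Then for every t with 0 < t < 1/(2σ²), the cumulant generating function of X² − E[X²] satisfies log E[exp(t(X² − σ_X²))] ≤ 8σ⁴t²/(1 − 2σ²t). That is, X² − E[X²] is (16σ⁴, 2σ²)-subgamma on the right tail. -/

import Mathlib

open MeasureTheory ProbabilityTheory

lemma my_integral_exp_neg_mul_Ioi {b : ℝ} (hb : 0 < b) :
    ∫ x in Set.Ioi (0:ℝ), Real.exp (-b*x) = 1/b := by
  have hderiv : ∀ x ∈ Set.Ici (0:ℝ),
      HasDerivAt (fun x => -Real.exp (-b*x)/b) (Real.exp (-b*x)) x := by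
    intro x _
    have h := (((hasDerivAt_id x).const_mul (-b)).exp).neg.div_const b
    refine h.congr_deriv ?_
    field_simp
    rfl
  have htend : Filter.Tendsto (fun x => -Real.exp (-b*x)/b) Filter.atTop (nhds 0) := by
    have : Filter.Tendsto (fun x => -Real.exp (-b * x) / b) Filter.atTop (nhds (-0 / b)) := by
      refine Filter.Tendsto.div_const (Filter.Tendsto.neg ?_) _
      exact Real.tendsto_exp_atBot.comp (Filter.tendsto_id.const_mul_atTop_of_neg (by linarith))
    simpa using this
  have h := MeasureTheory.integral_Ioi_of_hasDerivAt_of_tendsto'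
    hderiv (exp_neg_integrableOn_Ioi 0 hb) htend
  rw [h]
  simp [div_eq_mul_inv]

lemma my_chernoff {Ω : Type*} [MeasurableSpace Ω] (μ : Measure Ω) [IsProbabilityMeasure μ]
    (X : Ω → ℝ) (σ : ℝ) (hσ : 0 < σ)
    (hint : ∀ s : ℝ, Integrable (fun ω => Real.exp (s * X ω)) μ)
    (hsub : ∀ s : ℝ, ∫ ω, Real.exp (s * X ω) ∂μ ≤ Real.exp (s ^ 2 * σ ^ 2 / 2)) :
    ∀ v : ℝ, 0 < v → μ {ω | v ≤ X ω ^ 2} ≤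
      ENNReal.ofReal (2 * Real.exp (-(1/(2*σ^2)) * v)) := by
  intro v hv
  set s := Real.sqrt v with hs_def
  have hs : 0 < s := Real.sqrt_pos.mpr hv
  have hs2 : s ^ 2 = v := Real.sq_sqrt hv.le
  have hsubset : {ω | v ≤ X ω ^ 2} ⊆ {ω | s ≤ X ω} ∪ {ω | X ω ≤ -s} := by
    intro ω hω
    simp only [Set.mem_setOf_eq, Set.mem_union] at *
    by_contra h
    push_neg at h
    obtain ⟨h1, h2⟩ := h
    nlinarith
  have key : -(s/σ^2) * s + (s/σ^2)^2 * σ^2/2 = -(1/(2*σ^2)) * v := by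
    rw [← hs2]; field_simp; ring
  have hup : (μ {ω | s ≤ X ω}).toReal ≤ Real.exp (-(1/(2*σ^2)) * v) := by
    have h1 := measure_ge_le_exp_mul_mgf (μ := μ) (X := X) s
      (t := s/σ^2) (by positivity) (hint _)
    refine h1.trans ?_
    have h2 : mgf X μ (s/σ^2) ≤ Real.exp ((s/σ^2)^2 * σ^2/2) := hsub _
    calc Real.exp (-(s/σ^2) * s) * mgf X μ (s/σ^2)
        ≤ Real.exp (-(s/σ^2) * s) * Real.exp ((s/σ^2)^2 * σ^2/2) := by
          exact mul_le_mul_of_nonneg_left h2 (Real.exp_pos _).le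
      _ = Real.exp (-(1/(2*σ^2)) * v) := by rw [← Real.exp_add, key]
  have hdown : (μ {ω | X ω ≤ -s}).toReal ≤ Real.exp (-(1/(2*σ^2)) * v) := by
    have h1 := measure_le_le_exp_mul_mgf (μ := μ) (X := X) (-s)
      (t := -(s/σ^2)) (neg_nonpos.mpr (by positivity)) (hint _)
    refine h1.trans ?_
    have h2 : mgf X μ (-(s/σ^2)) ≤ Real.exp ((-(s/σ^2))^2 * σ^2/2) := hsub _
    calc Real.exp (-(-(s/σ^2)) * (-s)) * mgf X μ (-(s/σ^2))
        ≤ Real.exp (-(-(s/σ^2)) * (-s)) * Real.exp ((-(s/σ^2))^2 * σ^2/2) := by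
          exact mul_le_mul_of_nonneg_left h2 (Real.exp_pos _).le
      _ = Real.exp (-(1/(2*σ^2)) * v) := by
          rw [← Real.exp_add, ← key]; ring_nf
  calc μ {ω | v ≤ X ω ^ 2} ≤ μ ({ω | s ≤ X ω} ∪ {ω | X ω ≤ -s}) := measure_mono hsubset
    _ ≤ μ {ω | s ≤ X ω} + μ {ω | X ω ≤ -s} := measure_union_le _ _
    _ ≤ ENNReal.ofReal (Real.exp (-(1/(2*σ^2)) * v)) +
        ENNReal.ofReal (Real.exp (-(1/(2*σ^2)) * v)) := by
        gcongr
        · rw [← ENNReal.ofReal_toReal (measure_ne_top μ _)]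
          exact ENNReal.ofReal_le_ofReal hup
        · rw [← ENNReal.ofReal_toReal (measure_ne_top μ _)]
          exact ENNReal.ofReal_le_ofReal hdown
    _ = ENNReal.ofReal (2 * Real.exp (-(1/(2*σ^2)) * v)) := by
        rw [← ENNReal.ofReal_add (Real.exp_pos _).le (Real.exp_pos _).le]
        ring_nf

/-- Right-tail subgamma bound: for a mean-zero `σ`-subgaussian `X` with variance `σ_X²`,
for `0 < t < 1/(2σ²)`, `log E[exp(t(X² − σ_X²))] ≤ 8σ⁴t²/(1 − 2σ²t)`;
i.e. `X² − E[X²]` is `(16σ⁴, 2σ²)`-subgamma on the right tail. -/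
theorem stmt4 {Ω : Type*} [MeasurableSpace Ω] (μ : Measure Ω) [IsProbabilityMeasure μ]
    (X : Ω → ℝ) (hX : Measurable X) (σ σX : ℝ) (hσ : 0 < σ)
    (hmean : ∫ ω, X ω ∂μ = 0)
    (hvar : variance X μ = σX ^ 2)
    (hsub : ∀ s : ℝ, ∫ ω, Real.exp (s * X ω) ∂μ ≤ Real.exp (s ^ 2 * σ ^ 2 / 2)) :
    ∀ t : ℝ, 0 < t → t < 1 / (2 * σ ^ 2) →
      Real.log (∫ ω, Real.exp (t * (X ω ^ 2 - σX ^ 2)) ∂μ) ≤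
        8 * σ ^ 4 * t ^ 2 / (1 - 2 * σ ^ 2 * t) := by
  intro t ht htu
  have hσ2 : (0:ℝ) < 2 * σ ^ 2 := by positivity
  have h1u : (0:ℝ) < 1 - 2 * σ ^ 2 * t := by
    have := (lt_div_iff₀ hσ2).mp htu
    nlinarith
  have hRHS0 : 0 ≤ 8 * σ ^ 4 * t ^ 2 / (1 - 2 * σ ^ 2 * t) :=
    div_nonneg (by positivity) h1u.le
  by_cases hg : Integrable (fun ω => Real.exp (t * X ω ^ 2)) μ
  swap
  · have hnot : ¬ Integrable (fun ω => Real.exp (t * (X ω ^ 2 - σX ^ 2))) μ := by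
      intro h
      have h2 := h.const_mul (Real.exp (t * σX ^ 2))
      apply hg
      have heq : (fun ω => Real.exp (t * σX ^ 2) * Real.exp (t * (X ω ^ 2 - σX ^ 2)))
          = fun ω => Real.exp (t * X ω ^ 2) := by
        funext ω
        rw [← Real.exp_add]
        congr 1
        ring
      rwa [heq] at h2
    rw [integral_undef hnot, Real.log_zero]
    exact hRHS0
  -- main case
  set k : ℝ := 1 / (2 * σ ^ 2) with hk_def
  have hkpos : 0 < k := by rw [hk_def]; positivity
  have hkt : 0 < k - t := sub_pos.mpr htu
  have hX2 : Integrable (fun ω => X ω ^ 2) μ := by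
    refine Integrable.mono' (hg.const_mul t⁻¹)
      ((hX.pow_const 2).aestronglyMeasurable) (ae_of_all _ fun ω => ?_)
    rw [Real.norm_eq_abs, abs_of_nonneg (sq_nonneg _)]
    have h1 := Real.add_one_le_exp (t * X ω ^ 2)
    calc X ω ^ 2 = t⁻¹ * (t * X ω ^ 2) := by field_simp
      _ ≤ t⁻¹ * Real.exp (t * X ω ^ 2) := by
          exact mul_le_mul_of_nonneg_left (by linarith) (inv_nonneg.mpr ht.le)
  have hmem : MemLp X 2 μ := (memLp_two_iff_integrable_sq hX.aestronglyMeasurable).mpr hX2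
  have hEX2 : ∫ ω, X ω ^ 2 ∂μ = σX ^ 2 := by
    have h := variance_eq_sub hmem
    simp only [Pi.pow_apply, hmean] at h
    rw [hvar] at h
    norm_num at h
    exact h.symm
  have hmgf_int : ∀ s : ℝ, Integrable (fun ω => Real.exp (s * X ω)) μ := by
    intro s
    refine Integrable.mono' (hg.const_mul (Real.exp (s ^ 2 / (4 * t))))
      ((measurable_const.mul hX).exp.aestronglyMeasurable) (ae_of_all _ fun ω => ?_)
    rw [Real.norm_eq_abs, Real.abs_exp, ← Real.exp_add]
    refine Real.exp_le_exp.mpr ?_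
    rw [← sub_nonneg]
    have h4 : (0:ℝ) < 4 * t := by linarith
    have heq : s ^ 2 / (4 * t) + t * X ω ^ 2 - s * X ω
        = (2 * t * X ω - s) ^ 2 / (4 * t) := by
      field_simp
      ring
    rw [heq]
    positivity
  have htail := my_chernoff μ X σ hσ hmgf_int hsub
  -- the integrand for the layer cake formula
  have hgnn : ∀ v : ℝ, 0 ≤ v → 0 ≤ t * Real.exp (t * v) - t := by
    intro v hv
    have h1 : (1:ℝ) ≤ Real.exp (t * v) := Real.one_le_exp (by positivity)
    nlinarith
  have hgcont : Continuous (fun v : ℝ => t * Real.exp (t * v) - t) := by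
    continuity
  have hGeq : ∀ x : ℝ,
      (∫ v in (0:ℝ)..x, (t * Real.exp (t * v) - t)) = Real.exp (t * x) - 1 - t * x := by
    intro x
    have hder : ∀ v ∈ Set.uIcc (0:ℝ) x,
        HasDerivAt (fun y => Real.exp (t * y) - t * y) (t * Real.exp (t * v) - t) v := by
      intro v _
      have h1 : HasDerivAt (fun y : ℝ => t * y) t v := by
        simpa using (hasDerivAt_id v).const_mul t
      have h2 := h1.exp.sub h1
      refine h2.congr_deriv ?_
      ring
    have hii : IntervalIntegrable (fun v => t * Real.exp (t * v) - t) volume 0 x :=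
      hgcont.intervalIntegrable _ _
    rw [intervalIntegral.integral_eq_sub_of_hasDerivAt hder hii]
    simp [Real.exp_zero]
    ring
  have hlc := lintegral_comp_eq_lintegral_meas_le_mul μ (f := fun ω => X ω ^ 2)
    (g := fun v => t * Real.exp (t * v) - t)
    (ae_of_all _ fun ω => sq_nonneg _) ((hX.pow_const 2).aemeasurable)
    (fun x _ => hgcont.intervalIntegrable _ _)
    ((ae_restrict_iff' measurableSet_Ioi).mpr (ae_of_all _ fun v hv => hgnn v (le_of_lt hv)))
  simp_rw [hGeq] at hlc
  -- pointwise product rewrite for the RHS integrand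
  have heqfun : ∀ v : ℝ, (2 * Real.exp (-k * v)) * (t * Real.exp (t * v) - t)
      = (2 * t) * Real.exp (-(k - t) * v) - (2 * t) * Real.exp (-k * v) := by
    intro v
    have h1 : Real.exp (-k * v) * Real.exp (t * v) = Real.exp (-(k - t) * v) := by
      rw [← Real.exp_add]; congr 1; ring
    nlinarith [h1]
  have hintRHS : IntegrableOn
      (fun v => (2 * Real.exp (-k * v)) * (t * Real.exp (t * v) - t)) (Set.Ioi (0:ℝ)) := by
    have h1 : IntegrableOn
        (fun v => (2 * t) * Real.exp (-(k - t) * v) - (2 * t) * Real.exp (-k * v))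
        (Set.Ioi (0:ℝ)) :=
      ((exp_neg_integrableOn_Ioi 0 hkt).const_mul _).sub
        ((exp_neg_integrableOn_Ioi 0 hkpos).const_mul _)
    exact h1.congr_fun (fun v _ => (heqfun v).symm) measurableSet_Ioi
  have hval : ∫ v in Set.Ioi (0:ℝ), (2 * Real.exp (-k * v)) * (t * Real.exp (t * v) - t)
      = 8 * σ ^ 4 * t ^ 2 / (1 - 2 * σ ^ 2 * t) := by
    rw [setIntegral_congr_fun measurableSet_Ioi (fun v _ => heqfun v)]
    rw [integral_sub ((exp_neg_integrableOn_Ioi 0 hkt).const_mul _)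
      ((exp_neg_integrableOn_Ioi 0 hkpos).const_mul _),
      integral_const_mul, integral_const_mul,
      my_integral_exp_neg_mul_Ioi hkt, my_integral_exp_neg_mul_Ioi hkpos]
    rw [hk_def]
    have hne1 : (2:ℝ) * σ ^ 2 ≠ 0 := ne_of_gt hσ2
    have hne2 : (1:ℝ) - 2 * σ ^ 2 * t ≠ 0 := ne_of_gt h1u
    have hne3 : 1 / (2 * σ ^ 2) - t ≠ 0 := by
      rw [← hk_def]; exact ne_of_gt hkt
    field_simp
    have hne4 : (1:ℝ) - t * σ ^ 2 * 2 ≠ 0 := by intro h; apply hne2; linarith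
    have hinv : (1 - t * σ ^ 2 * 2) * (1 - t * σ ^ 2 * 2)⁻¹ = 1 := mul_inv_cancel₀ hne4
    linear_combination 4 * hinv
  have hbound : ∫⁻ v in Set.Ioi (0:ℝ),
      μ {a | v ≤ X a ^ 2} * ENNReal.ofReal (t * Real.exp (t * v) - t)
      ≤ ENNReal.ofReal (8 * σ ^ 4 * t ^ 2 / (1 - 2 * σ ^ 2 * t)) := by
    have step1 : ∫⁻ v in Set.Ioi (0:ℝ),
        μ {a | v ≤ X a ^ 2} * ENNReal.ofReal (t * Real.exp (t * v) - t)
        ≤ ∫⁻ v in Set.Ioi (0:ℝ),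
          ENNReal.ofReal ((2 * Real.exp (-k * v)) * (t * Real.exp (t * v) - t)) := by
      refine lintegral_mono_ae ((ae_restrict_iff' measurableSet_Ioi).mpr
        (ae_of_all _ fun v hv => ?_))
      rw [ENNReal.ofReal_mul (by positivity : (0:ℝ) ≤ 2 * Real.exp (-k * v))]
      have := htail v hv
      rw [← hk_def] at this
      exact mul_le_mul_left this _
    refine step1.trans ?_
    rw [← ofReal_integral_eq_lintegral_ofReal hintRHS
      ((ae_restrict_iff' measurableSet_Ioi).mpr (ae_of_all _ fun v hv =>
        mul_nonneg (by positivity) (hgnn v hv.le)))]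
    exact ENNReal.ofReal_le_ofReal (le_of_eq hval)
  have hmain : ∫ ω, (Real.exp (t * X ω ^ 2) - 1 - t * X ω ^ 2) ∂μ
      ≤ 8 * σ ^ 4 * t ^ 2 / (1 - 2 * σ ^ 2 * t) := by
    have hnn : 0 ≤ᵐ[μ] fun ω => Real.exp (t * X ω ^ 2) - 1 - t * X ω ^ 2 :=
      ae_of_all _ fun ω => by
        simp only [Pi.zero_apply]
        nlinarith [Real.add_one_le_exp (t * X ω ^ 2)]
    rw [integral_eq_lintegral_of_nonneg_ae hnn
      (((hg.sub (integrable_const 1)).sub (hX2.const_mul t)).aestronglyMeasurable)]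
    exact ENNReal.toReal_le_of_le_ofReal hRHS0 (le_of_eq_of_le hlc hbound)
  have hsplit : ∫ ω, (Real.exp (t * X ω ^ 2) - 1 - t * X ω ^ 2) ∂μ
      = (∫ ω, Real.exp (t * X ω ^ 2) ∂μ) - 1 - t * σX ^ 2 := by
    have e1 : ∫ ω, (Real.exp (t * X ω ^ 2) - 1 - t * X ω ^ 2) ∂μ
        = (∫ ω, (Real.exp (t * X ω ^ 2) - 1) ∂μ) - ∫ ω, t * X ω ^ 2 ∂μ :=
      integral_sub (hg.sub (integrable_const 1)) (hX2.const_mul t)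
    have e2 : ∫ ω, (Real.exp (t * X ω ^ 2) - 1) ∂μ
        = (∫ ω, Real.exp (t * X ω ^ 2) ∂μ) - ∫ ω, (1:ℝ) ∂μ :=
      integral_sub hg (integrable_const 1)
    have e3 : ∫ ω, t * X ω ^ 2 ∂μ = t * σX ^ 2 := by
      rw [integral_const_mul, hEX2]
    have e4 : ∫ ω, (1:ℝ) ∂μ = 1 := by simp
    rw [e1, e2, e3, e4]
  have hIub : ∫ ω, Real.exp (t * X ω ^ 2) ∂μ
      ≤ 1 + t * σX ^ 2 + 8 * σ ^ 4 * t ^ 2 / (1 - 2 * σ ^ 2 * t) := by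
    rw [hsplit] at hmain
    linarith
  have hIpos : 0 < ∫ ω, Real.exp (t * X ω ^ 2) ∂μ := by
    have h := mgf_pos' (μ := μ) (X := fun ω => X ω ^ 2)
      (IsProbabilityMeasure.ne_zero μ) hg
    simpa [mgf] using h
  have hrw : ∫ ω, Real.exp (t * (X ω ^ 2 - σX ^ 2)) ∂μ
      = Real.exp (-(t * σX ^ 2)) * ∫ ω, Real.exp (t * X ω ^ 2) ∂μ := by
    rw [← integral_const_mul]
    congr 1
    funext ω
    rw [← Real.exp_add]
    congr 1
    ring
  rw [hrw, Real.log_mul (Real.exp_ne_zero _) (ne_of_gt hIpos), Real.log_exp]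
  have hlog := Real.log_le_sub_one_of_pos hIpos
  linarith
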